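/- Let H and n be natural numbers with n ≥ 1, and let X₁, …, X_n be independent identically distributed real random variables each taking the value 2^H with probability 2^{-H} and the value 0 otherwise. Let the estimator be the sample mean M = (1/n) ∑_{i=1}^n X_i. Then E[M] = 1, and the mean squared error E[(M − 1)²] equals (2^H − 1)/n. In particular, for any fixed number of trajectories n, the mean squared error of this estimator grows exponentially in H, being bounded below by 2^{H-1}/n for H ≥ 1. -/

import Mathlib

open MeasureTheory ProbabilityTheory Finset
open scoped ENNReal

section Aux

variable {Ω : Type*} [MeasureSpace Ω] [IsProbabilityMeasure (ℙ : Measure Ω)]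

lemma pdis_aux (H : ℕ) (Y : Ω → ℝ) (hm : Measurable Y)
    (hvals : ∀ ω, Y ω = 2 ^ H ∨ Y ω = 0)
    (hprob : ℙ {ω | Y ω = 2 ^ H} = ((2 : ℝ≥0∞) ^ H)⁻¹) :
    MemLp Y 2 ℙ ∧ (∫ ω, Y ω ∂ℙ) = 1 ∧ variance Y ℙ = (2 : ℝ) ^ H - 1 := by
  set A : Set Ω := {ω | Y ω = 2 ^ H} with hA
  have hAm : MeasurableSet A := hm (measurableSet_singleton _)
  have hrepr : Y = A.indicator (fun _ => (2 : ℝ) ^ H) := by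
    funext ω
    rcases hvals ω with h | h
    · have hmemA : ω ∈ A := h
      rw [Set.indicator_of_mem hmemA, h]
    · have hnot : ω ∉ A := by
        intro hc
        have hc' : Y ω = 2 ^ H := hc
        rw [h] at hc'
        exact (pow_pos two_pos H).ne' hc'.symm
      rw [Set.indicator_of_notMem hnot, h]
  have hμA : (ℙ A).toReal = ((2 : ℝ) ^ H)⁻¹ := by
    rw [hprob]
    rw [ENNReal.toReal_inv]
    norm_num
  have hmem : MemLp Y 2 ℙ := by
    rw [hrepr]
    exact memLp_indicator_const 2 hAm _ (Or.inr (measure_ne_top _ _))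
  have hEY : (∫ ω, Y ω ∂ℙ) = 1 := by
    rw [hrepr]
    rw [integral_indicator_const _ hAm, smul_eq_mul, measureReal_def, hμA]
    field_simp
  have hEY2 : (∫ ω, (Y ω) ^ 2 ∂ℙ) = (2 : ℝ) ^ H := by
    have : (fun ω => (Y ω) ^ 2) = A.indicator (fun _ => ((2 : ℝ) ^ H) ^ 2) := by
      funext ω
      rw [hrepr]
      by_cases h : ω ∈ A
      · rw [Set.indicator_of_mem h, Set.indicator_of_mem h]
      · rw [Set.indicator_of_notMem h, Set.indicator_of_notMem h]
        norm_num
    rw [this, integral_indicator_const _ hAm, smul_eq_mul, measureReal_def, hμA]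
    field_simp
  refine ⟨hmem, hEY, ?_⟩
  rw [variance_eq_sub hmem]
  have h2 : (∫ ω, (Y ^ 2) ω ∂ℙ) = (2 : ℝ) ^ H := hEY2
  rw [h2, hEY]
  ring

end Aux

/-- **Theorem 1 (quantitative form): the MSE of the PDIS estimator is `Ω(2^H)`.**
Let `X 1, …, X n` be i.i.d. random variables each taking the value `2^H` with
probability `2^{-H}` and `0` otherwise (the per-trajectory PDIS estimates in the
two-chain MDP).  The sample mean `M = (1/n) ∑ i, X i` satisfies `E[M] = 1` and
`E[(M - 1)²] = (2^H - 1)/n`; in particular, for `H ≥ 1` the mean squared error is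
at least `2^(H-1)/n`, i.e. it grows exponentially with the horizon `H`. -/
theorem pdis_sample_mean_mse {Ω : Type*} [MeasureSpace Ω]
    [IsProbabilityMeasure (ℙ : Measure Ω)]
    (H n : ℕ) (hn : 1 ≤ n) (X : Fin n → Ω → ℝ)
    (hmeas : ∀ i, Measurable (X i))
    (hindep : iIndepFun X ℙ)
    (hvals : ∀ i ω, X i ω = 2 ^ H ∨ X i ω = 0)
    (hprob : ∀ i, ℙ {ω | X i ω = 2 ^ H} = ((2 : ℝ≥0∞) ^ H)⁻¹) :
    (∫ ω, (1 / (n : ℝ)) * ∑ i, X i ω ∂ℙ) = 1 ∧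
    (∫ ω, ((1 / (n : ℝ)) * ∑ i, X i ω - 1) ^ 2 ∂ℙ) = ((2 : ℝ) ^ H - 1) / n ∧
    (1 ≤ H → (2 : ℝ) ^ (H - 1) / n ≤ ((2 : ℝ) ^ H - 1) / n) := by
  have haux := fun i => pdis_aux H (X i) (hmeas i) (hvals i) (hprob i)
  have hmem : ∀ i, MemLp (X i) 2 ℙ := fun i => (haux i).1
  have hEX : ∀ i, (∫ ω, X i ω ∂ℙ) = 1 := fun i => (haux i).2.1
  have hvar : ∀ i, variance (X i) ℙ = (2 : ℝ) ^ H - 1 := fun i => (haux i).2.2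
  have hint : ∀ i, Integrable (X i) ℙ := fun i => (hmem i).integrable one_le_two
  have hn0 : (n : ℝ) ≠ 0 := Nat.cast_ne_zero.mpr (by omega)
  -- expectation of the sum
  have hES : (∫ ω, ∑ i, X i ω ∂ℙ) = (n : ℝ) := by
    rw [integral_finset_sum _ (fun i _ => hint i)]
    simp [hEX]
  have hmean : (∫ ω, (1 / (n : ℝ)) * ∑ i, X i ω ∂ℙ) = 1 := by
    rw [integral_const_mul, hES]
    field_simp
  refine ⟨hmean, ?_, ?_⟩
  · -- variance of the sum
    have hmemS : MemLp (∑ i, X i) 2 ℙ := memLp_finset_sum' _ (fun i _ => hmem i)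
    have hvarS : variance (∑ i, X i) ℙ = (n : ℝ) * ((2 : ℝ) ^ H - 1) := by
      rw [IndepFun.variance_sum (fun i _ => hmem i)
        (fun i _ j _ hij => hindep.indepFun hij)]
      simp [hvar, mul_comm]
      ring
    have hESfun : (∫ ω, (∑ i, X i) ω ∂ℙ) = (n : ℝ) := by
      simpa using hES
    have key := variance_eq_integral hmemS.aemeasurable
    rw [hESfun, hvarS] at key
    have : (∫ ω, ((1 / (n : ℝ)) * ∑ i, X i ω - 1) ^ 2 ∂ℙ)
        = (1 / (n : ℝ)) ^ 2 * ∫ ω, ((∑ i, X i) ω - (n : ℝ)) ^ 2 ∂ℙ := by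
      rw [← integral_const_mul]
      congr 1
      funext ω
      field_simp
      rw [Finset.sum_apply]
    rw [this, ← key]
    field_simp
  · intro hH
    have hnpos : (0:ℝ) < n := by exact_mod_cast hn
    gcongr
    have h2 : (2 : ℝ) ^ H = 2 * 2 ^ (H - 1) := by
      rw [← pow_succ']
      congr 1
      omega
    have h1 : (1 : ℝ) ≤ 2 ^ (H - 1) := one_le_pow₀ (by norm_num)
    nlinarith
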